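/- For any composable maps X₀ →f₁ X₁ →f₂ X₂ →f₃ X₃ in a triangulated category, the iterated cofiber Toda bracket equals the fiber-cofiber Toda bracket: ⟨f₃, f₂, f₁⟩_cc = ⟨f₃, f₂, f₁⟩_fc as subsets of T(ΣX₀, X₃). -/

import Mathlib

open CategoryTheory Category Limits Pretriangulated

variable {C : Type*} [Category C] [Preadditive C] [HasZeroObject C]
  [HasShift C ℤ] [∀ n : ℤ, (shiftFunctor C n).Additive] [Pretriangulated C]

/-- The fiber-cofiber Toda bracket `⟨f₃, f₂, f₁⟩_fc`: all composites `β ∘ Σα` where,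
for a distinguished triangle `F ⟶ X₁ ⟶ X₂ ⟶ ΣF` (so `F = Σ⁻¹C_{f₂}` and `ΣF = C_{f₂}`),
`α : X₀ ⟶ F` lifts `f₁` and `β : ΣF ⟶ X₃` extends `f₃`. -/
def fcBracket {X₀ X₁ X₂ X₃ : C} (f₁ : X₀ ⟶ X₁) (f₂ : X₁ ⟶ X₂) (f₃ : X₂ ⟶ X₃) :
    Set (X₀⟦(1:ℤ)⟧ ⟶ X₃) :=
  { ψ | ∃ (F : C) (j : F ⟶ X₁) (q : X₂ ⟶ F⟦(1:ℤ)⟧)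
      (_ : Triangle.mk j f₂ q ∈ distTriang C)
      (α : X₀ ⟶ F) (β : F⟦(1:ℤ)⟧ ⟶ X₃),
      α ≫ j = f₁ ∧ q ≫ β = f₃ ∧ ψ = α⟦(1:ℤ)⟧' ≫ β }

/-- The iterated cofiber Toda bracket `⟨f₃, f₂, f₁⟩_cc`. -/
def ccBracket {X₀ X₁ X₂ X₃ : C} (f₁ : X₀ ⟶ X₁) (f₂ : X₁ ⟶ X₂) (f₃ : X₂ ⟶ X₃) :
    Set (X₀⟦(1:ℤ)⟧ ⟶ X₃) :=
  { ψ | ∃ (Cf : C) (q : X₁ ⟶ Cf) (ι : Cf ⟶ X₀⟦(1:ℤ)⟧)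
      (_ : Triangle.mk f₁ q ι ∈ distTriang C)
      (φ : Cf ⟶ X₂), q ≫ φ = f₂ ∧ φ ≫ f₃ = ι ≫ ψ }

/-- The iterated fiber Toda bracket `⟨f₃, f₂, f₁⟩_ff`. -/
def ffBracket {X₀ X₁ X₂ X₃ : C} (f₁ : X₀ ⟶ X₁) (f₂ : X₁ ⟶ X₂) (f₃ : X₂ ⟶ X₃) :
    Set (X₀⟦(1:ℤ)⟧ ⟶ X₃) :=
  { ψ | ∃ (G : C) (j : X₃⟦(-1:ℤ)⟧ ⟶ G) (κ : G ⟶ X₂)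
      (_ : Triangle.mk j κ
        (f₃ ≫ (shiftFunctorCompIsoId C (-1:ℤ) (1:ℤ) (neg_add_cancel 1)).inv.app X₃) ∈
          distTriang C)
      (γ : X₁ ⟶ G) (δ : X₀ ⟶ X₃⟦(-1:ℤ)⟧),
      γ ≫ κ = f₂ ∧ f₁ ≫ γ = δ ≫ j ∧
      ψ = δ⟦(1:ℤ)⟧' ≫ (shiftFunctorCompIsoId C (-1:ℤ) (1:ℤ) (neg_add_cancel 1)).hom.app X₃ }

/-- The iterated cofiber Toda bracket equals the fiber-cofiber Toda bracket:
`⟨f₃, f₂, f₁⟩_cc = ⟨f₃, f₂, f₁⟩_fc` as subsets of `T(ΣX₀, X₃)`. -/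
theorem ccBracket_eq_fcBracket {X₀ X₁ X₂ X₃ : C}
    (f₁ : X₀ ⟶ X₁) (f₂ : X₁ ⟶ X₂) (f₃ : X₂ ⟶ X₃) :
    ccBracket f₁ f₂ f₃ = fcBracket f₁ f₂ f₃ := by
  ext ψ
  constructor
  · rintro ⟨Cf, q, ι, hT₁, φ, hφq, hφf⟩
    obtain ⟨Z, u, v, hT₂⟩ := distinguished_cocone_triangle f₂
    obtain ⟨m₁, hm₁, hm₂'⟩ := complete_distinguished_triangle_morphism
      (Triangle.mk f₁ q ι).rotate (Triangle.mk f₂ u v)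
      (rot_of_distTriang _ hT₁) hT₂ (𝟙 X₁) φ (hφq.trans (id_comp f₂).symm)
    change X₀⟦(1:ℤ)⟧ ⟶ Z at m₁
    change ι ≫ m₁ = φ ≫ u at hm₁
    change (-f₁⟦(1:ℤ)⟧') ≫ (𝟙 X₁)⟦(1:ℤ)⟧' = m₁ ≫ v at hm₂'
    have hm₂ : m₁ ≫ v = -f₁⟦(1:ℤ)⟧' := by
      rw [← hm₂', CategoryTheory.Functor.map_id, comp_id]
    -- extend f₃ over u
    have h0 : q ≫ ι = 0 := comp_distTriang_mor_zero₂₃ _ hT₁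
    have hf₂f₃ : f₂ ≫ f₃ = 0 := by
      rw [← hφq, assoc, hφf, ← assoc, h0, zero_comp]
    obtain ⟨β₀, hβ₀⟩ := Triangle.yoneda_exact₂ _ hT₂ f₃ hf₂f₃
    change Z ⟶ X₃ at β₀
    change f₃ = u ≫ β₀ at hβ₀
    -- correct β₀ so that it also pulls back to ψ
    have hδ : ι ≫ (ψ - m₁ ≫ β₀) = 0 := by
      rw [Preadditive.comp_sub, ← assoc, hm₁, assoc, ← hβ₀, hφf, sub_self]
    obtain ⟨ε, hε⟩ := Triangle.yoneda_exact₃ _ (rot_of_distTriang _ hT₁)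
      (ψ - m₁ ≫ β₀) hδ
    change X₁⟦(1:ℤ)⟧ ⟶ X₃ at ε
    change ψ - m₁ ≫ β₀ = (-f₁⟦(1:ℤ)⟧') ≫ ε at hε
    set β' : Z ⟶ X₃ := β₀ + v ≫ ε with hβ'
    have huβ' : u ≫ β' = f₃ := by
      have h1 : u ≫ v = 0 := comp_distTriang_mor_zero₂₃ _ hT₂
      rw [hβ', Preadditive.comp_add, ← assoc, h1, zero_comp, add_zero, ← hβ₀]
    have hm₁β' : m₁ ≫ β' = ψ := by
      rw [hβ', Preadditive.comp_add, ← assoc, hm₂, ← hε]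
      abel
    -- package via the inverse rotation of the triangle on f₂
    refine ⟨Z⟦(-1:ℤ)⟧, (Triangle.mk f₂ u v).invRotate.mor₁,
      (Triangle.mk f₂ u v).invRotate.mor₃,
      inv_rot_of_distTriang _ hT₂,
      (shiftFunctorCompIsoId C (1:ℤ) (-1:ℤ) (add_neg_cancel 1)).inv.app X₀ ≫ m₁⟦(-1:ℤ)⟧',
      (shiftFunctorCompIsoId C (-1:ℤ) (1:ℤ) (neg_add_cancel 1)).hom.app Z ≫ β', ?_, ?_, ?_⟩
    · have hnat := (shiftFunctorCompIsoId C (1:ℤ) (-1:ℤ) (add_neg_cancel 1)).inv.naturality f₁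
      dsimp at hnat
      change ((shiftFunctorCompIsoId C (1:ℤ) (-1:ℤ) (add_neg_cancel 1)).inv.app X₀ ≫ m₁⟦(-1:ℤ)⟧') ≫
        (-(v⟦(-1:ℤ)⟧' ≫ (shiftFunctorCompIsoId C (1:ℤ) (-1:ℤ) (add_neg_cancel 1)).hom.app X₁)) = f₁
      rw [Preadditive.comp_neg, assoc, ← Functor.map_comp_assoc, hm₂, Functor.map_neg,
        Preadditive.neg_comp, Preadditive.comp_neg, neg_neg, ← assoc, ← hnat, assoc,
        Iso.inv_hom_id_app]
      exact comp_id f₁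
    · change (u ≫ (shiftFunctorCompIsoId C (-1:ℤ) (1:ℤ) (neg_add_cancel 1)).inv.app Z) ≫ (shiftFunctorCompIsoId C (-1:ℤ) (1:ℤ) (neg_add_cancel 1)).hom.app Z ≫ β' = f₃
      rw [assoc, Iso.inv_hom_id_app_assoc, huβ']
    · have hnat := (shiftFunctorCompIsoId C (-1:ℤ) (1:ℤ) (neg_add_cancel 1)).hom.naturality m₁
      dsimp at hnat
      rw [Functor.map_comp, assoc, ← assoc ((shiftFunctor C (1:ℤ)).map
        ((shiftFunctor C (-1:ℤ)).map m₁)), hnat,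
        shift_shiftFunctorCompIsoId_add_neg_cancel_inv_app]
      simp only [assoc]
      rw [Iso.inv_hom_id_app_assoc, hm₁β']
  · rintro ⟨F, j, qm, hT, α, β, hαj, hqβ, hψ⟩
    obtain ⟨Cf, q, ι, hT₁⟩ := distinguished_cocone_triangle f₁
    obtain ⟨φ, h1, h2⟩ := complete_distinguished_triangle_morphism
      (Triangle.mk f₁ q ι) (Triangle.mk j f₂ qm) hT₁ hT α (𝟙 X₁)
      ((comp_id f₁).trans hαj.symm)
    change Cf ⟶ X₂ at φ
    change q ≫ φ = 𝟙 X₁ ≫ f₂ at h1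
    change ι ≫ α⟦(1:ℤ)⟧' = φ ≫ qm at h2
    rw [id_comp] at h1
    refine ⟨Cf, q, ι, hT₁, φ, h1, ?_⟩
    rw [← hqβ, ← assoc, ← h2, assoc, ← hψ]
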